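/- Let h(t) be a polynomial over ℚ that is not squarefull (some irreducible factor appears with multiplicity exactly one). Then there exist infinitely many primes p and integers t_0 such that p exactly divides h(t_0) (p | h(t_0) but p^2 ∤ h(t_0)). -/

import Mathlib

open Polynomial

/-- Clearing denominators of a rational polynomial. -/
lemma exists_int_poly (f : ℚ[X]) :
    ∃ (F : ℤ[X]) (m : ℤ), m ≠ 0 ∧ F.map (Int.castRingHom ℚ) = m • f := by
  obtain ⟨b, hb⟩ := IsLocalization.integerNormalization_map_to_map (nonZeroDivisors ℤ) f
  refine ⟨IsLocalization.integerNormalization (nonZeroDivisors ℤ) f,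
    (b : ℤ), nonZeroDivisors.coe_ne_zero b, ?_⟩
  rw [← algebraMap_int_eq, hb]

lemma eval_int_ver {f : ℚ[X]} {F : ℤ[X]} {m : ℤ}
    (hF : F.map (Int.castRingHom ℚ) = m • f) (t : ℤ) :
    ((F.eval t : ℤ) : ℚ) = m * f.eval (t : ℚ) := by
  have h1 := eval_intCast_map (Int.castRingHom ℚ) F t
  rw [hF] at h1
  simpa [zsmul_eq_mul] using h1.symm

/-- A nonconstant integer polynomial has a prime divisor of some value, avoiding
any finite set of primes (encoded by a nonzero integer `M`). -/
lemma exists_prime_dvd_eval (Q : ℤ[X]) (hQ : 0 < Q.natDegree) (M : ℤ) (hM : M ≠ 0) :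
    ∃ (p : ℕ) (t : ℤ), p.Prime ∧ ¬ (p : ℤ) ∣ M ∧ (p : ℤ) ∣ Q.eval t := by
  set c : ℤ := Q.eval 0 with hc
  by_cases hc0 : c = 0
  · -- X divides Q
    obtain ⟨p, hpM, hp⟩ := Nat.exists_infinite_primes (M.natAbs + 1)
    refine ⟨p, p, hp, ?_, ?_⟩
    · intro hd
      have h1 : (p : ℕ) ∣ M.natAbs := Int.natCast_dvd_natCast.mp (Int.dvd_natAbs.mpr hd)
      have h2 : (p : ℕ) ≤ M.natAbs := Nat.le_of_dvd (Int.natAbs_pos.mpr hM) h1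
      omega
    · have hX : (X : ℤ[X]) ∣ Q := by
        rw [X_dvd_iff, coeff_zero_eq_eval_zero, ← hc, hc0]
      have := Polynomial.eval_dvd (x := (p:ℤ)) hX
      simpa using this
  · -- main case
    have hQ0 : Q ≠ 0 := fun h => by rw [h] at hQ; simp at hQ
    have hcM : c * M ≠ 0 := mul_ne_zero hc0 hM
    -- bad set of k
    have hfin : {k : ℤ | Q.eval (c*M*k) = 0 ∨ Q.eval (c*M*k) = c ∨ Q.eval (c*M*k) = -c}.Finite := by
      have hsub : {k : ℤ | Q.eval (c*M*k) = 0 ∨ Q.eval (c*M*k) = c ∨ Q.eval (c*M*k) = -c}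
          ⊆ (fun k : ℤ => c*M*k) ⁻¹'
            ({x | IsRoot Q x} ∪ {x | IsRoot (Q - C c) x} ∪ {x | IsRoot (Q - C (-c)) x}) := by
        intro k hk
        simp only [Set.mem_preimage, Set.mem_union, Set.mem_setOf_eq, IsRoot.def,
          eval_sub, eval_C, sub_eq_zero] at *
        tauto
      refine Set.Finite.subset (Set.Finite.preimage ((mul_right_injective₀ hcM).injOn) ?_) hsub
      refine ((finite_setOf_isRoot hQ0).union (finite_setOf_isRoot ?_)).union
        (finite_setOf_isRoot ?_)
      · intro h0
        have h1 : Q = C c := sub_eq_zero.mp h0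
        rw [h1] at hQ
        simp at hQ
      · intro h0
        have h1 : Q = C (-c) := sub_eq_zero.mp h0
        rw [h1] at hQ
        simp at hQ
    obtain ⟨k, hk⟩ := (hfin.infinite_compl).nonempty
    simp only [Set.mem_compl_iff, Set.mem_setOf_eq, not_or] at hk
    obtain ⟨hk0, hkc, hkc'⟩ := hk
    -- factor Q = C c + X * R
    have hXdvd : (X : ℤ[X]) ∣ (Q - C c) := by
      rw [X_dvd_iff, coeff_sub, coeff_zero_eq_eval_zero, ← hc, coeff_C]
      simp
    obtain ⟨R, hR⟩ := hXdvd
    set x : ℤ := c * M * k with hx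
    set V : ℤ := Q.eval x with hV
    have hVR : V - c = x * R.eval x := by
      have := congrArg (Polynomial.eval x) hR
      simpa [hV] using this
    set u : ℤ := 1 + M * (k * R.eval x) with hu
    have hVu : V = c * u := by rw [hu]; linear_combination hVR
    have hV0 : V ≠ 0 := hk0
    have hVc : V ≠ c := hkc
    have hVc' : V ≠ -c := hkc'
    have hu0 : u ≠ 0 := fun h => hV0 (by rw [hVu, h, mul_zero])
    have hu1 : u ≠ 1 := fun h => hVc (by rw [hVu, h, mul_one])
    have hu2 : u ≠ -1 := fun h => hVc' (by rw [hVu, h]; ring)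
    have hnu : 2 ≤ u.natAbs := by omega
    refine ⟨u.natAbs.minFac, x, Nat.minFac_prime (by omega), ?_, ?_⟩
    · intro hd
      have hpu : (u.natAbs.minFac : ℤ) ∣ u :=
        dvd_trans (Int.natCast_dvd_natCast.mpr u.natAbs.minFac_dvd) (Int.natAbs_dvd.mpr dvd_rfl)
      have : (u.natAbs.minFac : ℤ) ∣ 1 := by
        have h2 : (u.natAbs.minFac : ℤ) ∣ M * (k * R.eval x) := hd.mul_right _
        have := dvd_sub hpu h2
        simpa [hu] using this
      have := Int.le_of_dvd one_pos this
      have := (Nat.minFac_prime (show u.natAbs ≠ 1 by omega)).two_le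
      omega
    · have hpu : (u.natAbs.minFac : ℤ) ∣ u :=
        dvd_trans (Int.natCast_dvd_natCast.mpr u.natAbs.minFac_dvd) (Int.natAbs_dvd.mpr dvd_rfl)
      rw [← hV, hVu]
      exact hpu.mul_left c

lemma bezout_eval (f g : ℚ[X]) (hc : IsCoprime f g) (F G : ℤ[X]) (m n : ℤ)
    (hm : m ≠ 0) (hn : n ≠ 0)
    (hF : F.map (Int.castRingHom ℚ) = m • f) (hG : G.map (Int.castRingHom ℚ) = n • g) :
    ∃ r : ℤ, r ≠ 0 ∧ ∀ t : ℤ, ∃ α β : ℤ, α * F.eval t + β * G.eval t = r := by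
  obtain ⟨a, b, hab⟩ := hc
  obtain ⟨A, d₁, hd₁, hA⟩ := exists_int_poly a
  obtain ⟨B, d₂, hd₂, hB⟩ := exists_int_poly b
  refine ⟨d₁ * d₂ * m * n, by positivity, fun t => ?_⟩
  refine ⟨A.eval t * (d₂ * n), B.eval t * (d₁ * m), ?_⟩
  have habt : a.eval (t:ℚ) * f.eval (t:ℚ) + b.eval (t:ℚ) * g.eval (t:ℚ) = 1 := by
    have := congrArg (Polynomial.eval ((t:ℤ):ℚ)) hab
    simpa using this
  have ea := eval_int_ver hA t
  have eb := eval_int_ver hB t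
  have ef := eval_int_ver hF t
  have eg := eval_int_ver hG t
  have key : ((A.eval t * (d₂ * n) * F.eval t + B.eval t * (d₁ * m) * G.eval t : ℤ) : ℚ)
      = ((d₁ * d₂ * m * n : ℤ) : ℚ) := by
    push_cast
    rw [ea, eb, ef, eg] at *
    linear_combination ((d₁:ℚ) * d₂ * m * n) * habt
      + (d₂:ℚ) * n * f.eval (t:ℚ) * ea + (d₁:ℚ) * m * g.eval (t:ℚ) * eb
      + (d₁:ℚ) * (a.eval (t:ℚ)) * d₂ * n * ef + (d₂:ℚ) * (b.eval (t:ℚ)) * d₁ * m * eg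
  exact_mod_cast key

lemma val_eq_one {p : ℕ} [hp : Fact p.Prime] {f g : ℚ[X]} {F G : ℤ[X]} {m n : ℤ}
    (hm : m ≠ 0) (hn : n ≠ 0)
    (hF : F.map (Int.castRingHom ℚ) = m • f) (hG : G.map (Int.castRingHom ℚ) = n • g)
    (t₀ : ℤ) (hpm : ¬ (p:ℤ) ∣ m) (hpn : ¬ (p:ℤ) ∣ n)
    (h1 : (p:ℤ) ∣ F.eval t₀) (h2 : ¬ (p:ℤ)^2 ∣ F.eval t₀) (h3 : ¬ (p:ℤ) ∣ G.eval t₀) :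
    padicValRat p ((f * g).eval (t₀ : ℚ)) = 1 := by
  have hF0 : F.eval t₀ ≠ 0 := fun h => h2 (h ▸ dvd_zero _)
  have hG0 : G.eval t₀ ≠ 0 := fun h => h3 (h ▸ dvd_zero _)
  have hfg : (f * g).eval (t₀ : ℚ) = ((F.eval t₀ * G.eval t₀ : ℤ) : ℚ) / ((m * n : ℤ) : ℚ) := by
    have ef := eval_int_ver hF t₀
    have eg := eval_int_ver hG t₀
    rw [eval_mul]
    push_cast
    rw [ef, eg]
    field_simp
  rw [hfg, padicValRat.div (by push_cast; exact_mod_cast mul_ne_zero hF0 hG0)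
    (by exact_mod_cast mul_ne_zero hm hn)]
  rw [padicValRat.of_int, padicValRat.of_int]
  rw [padicValInt.mul hF0 hG0]
  have vF : padicValInt p (F.eval t₀) = 1 := by
    have hle : 1 ≤ padicValInt p (F.eval t₀) := by
      rcases (padicValInt_dvd_iff 1 (F.eval t₀)).mp (by simpa using h1) with h | h
      · exact absurd h hF0
      · exact h
    have hlt : ¬ 2 ≤ padicValInt p (F.eval t₀) := fun hge =>
      h2 ((padicValInt_dvd_iff 2 (F.eval t₀)).mpr (Or.inr hge))
    omega
  have vG : padicValInt p (G.eval t₀) = 0 := padicValInt.eq_zero_of_not_dvd h3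
  have vmn : padicValInt p (m * n) = 0 := by
    refine padicValInt.eq_zero_of_not_dvd (fun hd => ?_)
    rcases (Nat.prime_iff_prime_int.mp hp.out).dvd_mul.mp hd with h | h
    · exact hpm h
    · exact hpn h
  rw [vF, vG, vmn]
  simp

theorem infinitely_many_exact_prime_divisors (h : ℚ[X]) (hdeg : 0 < h.natDegree)
    (hnsf : ∃ q : ℚ[X], Irreducible q ∧ q ∣ h ∧ ¬ q ^ 2 ∣ h) :
    {p : ℕ | p.Prime ∧ ∃ t₀ : ℤ, padicValRat p (h.eval (t₀ : ℚ)) = 1}.Infinite := by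
  obtain ⟨q, hq_irr, hq_dvd, hq2⟩ := hnsf
  obtain ⟨g, hg⟩ := hq_dvd
  have hh0 : h ≠ 0 := fun h0 => by rw [h0] at hdeg; simp at hdeg
  have hq0 : q ≠ 0 := fun h0 => by rw [h0, zero_mul] at hg; exact hh0 hg
  have hg0 : g ≠ 0 := fun h0 => by rw [h0, mul_zero] at hg; exact hh0 hg
  have hqg : ¬ q ∣ g := fun hd => hq2 (by rw [hg, pow_two]; exact mul_dvd_mul_left q hd)
  have hqdeg : 0 < q.natDegree := natDegree_pos_iff_degree_pos.mpr (degree_pos_of_irreducible hq_irr)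
  have hq'0 : q.derivative ≠ 0 := fun h0 => by
    have := natDegree_eq_zero_of_derivative_eq_zero h0
    omega
  have hqq' : ¬ q ∣ q.derivative := fun hd => by
    have h1 := Polynomial.degree_le_of_dvd hd hq'0
    have h2 := Polynomial.degree_derivative_lt hq0
    exact absurd h1 (not_le.mpr h2)
  have cop1 : IsCoprime q g := hq_irr.coprime_iff_not_dvd.mpr hqg
  have cop2 : IsCoprime q q.derivative := hq_irr.coprime_iff_not_dvd.mpr hqq'
  obtain ⟨Q, m, hm, hQ⟩ := exists_int_poly q
  obtain ⟨G, n, hn, hG⟩ := exists_int_poly g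
  have hQ' : Q.derivative.map (Int.castRingHom ℚ) = m • q.derivative := by
    have := congrArg Polynomial.derivative hQ
    rwa [derivative_map, derivative_smul] at this
  obtain ⟨r₁, hr₁, hbez₁⟩ := bezout_eval q g cop1 Q G m n hm hn hQ hG
  obtain ⟨r₂, hr₂, hbez₂⟩ := bezout_eval q q.derivative cop2 Q Q.derivative m m hm hm hQ hQ'
  have hQdeg : 0 < Q.natDegree := by
    have h1 : (Q.map (Int.castRingHom ℚ)).natDegree = Q.natDegree :=
      natDegree_map_eq_of_injective (by
        intro a b hab
        have : ((a : ℤ) : ℚ) = ((b : ℤ) : ℚ) := hab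
        exact_mod_cast this) Q
    have h2 : (m • q).natDegree = q.natDegree := by
      have e1 : (m • q) = C (m : ℚ) * q := by
        rw [← smul_eq_C_mul, Int.cast_smul_eq_zsmul]
      rw [e1, natDegree_C_mul (by exact_mod_cast hm)]
    rw [← h1, hQ, h2]; exact hqdeg
  by_contra hinf
  rw [Set.not_infinite] at hinf
  set s := hinf.toFinset with hs
  set k : ℤ := ∏ pp ∈ s, (pp : ℤ) with hk
  have hk0 : k ≠ 0 := by
    rw [hk]
    refine Finset.prod_ne_zero_iff.mpr (fun pp hpp => ?_)
    have := (hinf.mem_toFinset.mp hpp).1.pos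
    positivity
  set M : ℤ := r₁ * r₂ * m * n * k with hM
  have hM0 : M ≠ 0 := by positivity
  obtain ⟨p, t, hp, hpM, hpt⟩ := exists_prime_dvd_eval Q hQdeg M hM0
  haveI : Fact p.Prime := ⟨hp⟩
  have hpr₁ : ¬ (p:ℤ) ∣ r₁ := fun hd => hpM
    ((((hd.mul_right r₂).mul_right m).mul_right n).mul_right k)
  have hpr₂ : ¬ (p:ℤ) ∣ r₂ := fun hd => hpM
    ((((dvd_mul_of_dvd_right hd r₁).mul_right m).mul_right n).mul_right k)
  have hpm : ¬ (p:ℤ) ∣ m := fun hd => hpM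
    (((dvd_mul_of_dvd_right hd (r₁ * r₂)).mul_right n).mul_right k)
  have hpn : ¬ (p:ℤ) ∣ n := fun hd => hpM
    ((dvd_mul_of_dvd_right hd (r₁ * r₂ * m)).mul_right k)
  have hpk : ¬ (p:ℤ) ∣ k := fun hd => hpM (dvd_mul_of_dvd_right hd (r₁ * r₂ * m * n))
  have hpG : ¬ (p:ℤ) ∣ G.eval t := fun hd => by
    obtain ⟨α, β, hαβ⟩ := hbez₁ t
    exact hpr₁ (hαβ ▸ dvd_add (hpt.mul_left α) (hd.mul_left β))
  have hpQ' : ¬ (p:ℤ) ∣ Q.derivative.eval t := fun hd => by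
    obtain ⟨α, β, hαβ⟩ := hbez₂ t
    exact hpr₂ (hαβ ▸ dvd_add (hpt.mul_left α) (hd.mul_left β))
  -- choose t₀ with exact divisibility
  have hp0 : (p : ℤ) ≠ 0 := by exact_mod_cast hp.ne_zero
  obtain ⟨t₀, ht1, ht2, ht3⟩ : ∃ t₀ : ℤ, (p:ℤ) ∣ Q.eval t₀ ∧ ¬ (p:ℤ)^2 ∣ Q.eval t₀
      ∧ ¬ (p:ℤ) ∣ G.eval t₀ := by
    by_cases hsq : (p:ℤ)^2 ∣ Q.eval t
    · refine ⟨t + p, ?_, ?_, ?_⟩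
      · obtain ⟨k₁, hk₁⟩ := Q.binomExpansion t p
        rw [hk₁]
        exact dvd_add (dvd_add hpt (dvd_mul_left _ _)) ((dvd_pow_self _ two_ne_zero).mul_left k₁)
      · obtain ⟨k₁, hk₁⟩ := Q.binomExpansion t p
        intro hc
        rw [hk₁] at hc
        have h5 : (p:ℤ)^2 ∣ Q.derivative.eval t * p := by
          have h7 := (hc.sub hsq).sub ((dvd_refl ((p:ℤ)^2)).mul_left k₁)
          convert h7 using 1
          · rfl
          · ring
        have h6 : (p:ℤ) ∣ Q.derivative.eval t := by
          rw [pow_two] at h5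
          exact (mul_dvd_mul_iff_right hp0).mp h5
        exact hpQ' h6
      · obtain ⟨k₂, hk₂⟩ := G.binomExpansion t p
        intro hc
        rw [hk₂] at hc
        have h5 : (p:ℤ) ∣ G.eval t := by
          have h7 := (hc.sub (dvd_mul_left (p:ℤ) (G.derivative.eval t))).sub
            (((dvd_pow_self (p:ℤ) two_ne_zero).mul_left k₂))
          convert h7 using 1
          · rfl
          · ring
        exact hpG h5
    · exact ⟨t, hpt, hsq, hpG⟩
  -- p is in the set
  have hmem : p ∈ {p : ℕ | p.Prime ∧ ∃ t₀ : ℤ, padicValRat p (h.eval (t₀ : ℚ)) = 1} := by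
    refine ⟨hp, t₀, ?_⟩
    rw [hg]
    exact val_eq_one hm hn hQ hG t₀ hpm hpn ht1 ht2 ht3
  have : p ∈ s := hinf.mem_toFinset.mpr hmem
  exact hpk (Finset.dvd_prod_of_mem (fun pp : ℕ => (pp : ℤ)) this)
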